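/- For the hexagonal elastic symbol A(η) = D(η)ᵀ C D(η) in three dimensions, every unit vector η ∈ S² satisfies det(η | A(η)η | A²(η)η) = 0; in particular every direction is hyperbolic. Moreover, if η₁² + η₂² ≠ 0, the vector (η₂, −η₁, 0)ᵀ is an eigenvector of A(η) with eigenvalue ((τ₁−λ₁)/2)(η₁² + η₂²) + μ η₃², and this eigenvector is orthogonal to η. -/
import Mathlib


open Matrix BigOperators

/-- The 6×6 matrix of structure constants of a hexagonal medium. -/
noncomputable def Chex (τ₁ τ₂ lam₁ lam₂ μ : ℝ) : Matrix (Fin 6) (Fin 6) ℝ :=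
  !![τ₁, lam₁, lam₂, 0, 0, 0;
     lam₁, τ₁, lam₂, 0, 0, 0;
     lam₂, lam₂, τ₂, 0, 0, 0;
     0, 0, 0, μ, 0, 0;
     0, 0, 0, 0, μ, 0;
     0, 0, 0, 0, 0, (τ₁ - lam₁) / 2]

/-- The 6×3 matrix D(η) of the hexagonal elastic symbol. -/
noncomputable def Dhex (η : Fin 3 → ℝ) : Matrix (Fin 6) (Fin 3) ℝ :=
  !![η 0, 0, 0;
     0, η 1, 0;
     0, 0, η 2;
     0, η 2, η 1;
     η 2, 0, η 0;
     η 1, η 0, 0]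

/-- The hexagonal elastic symbol A(η) = D(η)ᵀ C D(η). -/
noncomputable def Ahex (τ₁ τ₂ lam₁ lam₂ μ : ℝ) (η : Fin 3 → ℝ) : Matrix (Fin 3) (Fin 3) ℝ :=
  (Dhex η)ᵀ * Chex τ₁ τ₂ lam₁ lam₂ μ * Dhex η

set_option maxHeartbeats 4000000 in
/-- for hexagonal media every unit direction η satisfies
det(η | A(η)η | A²(η)η) = 0 (every direction is hyperbolic); if η₁² + η₂² ≠ 0 the
vector (η₂, −η₁, 0)ᵀ is an eigenvector of A(η) with eigenvalue
((τ₁−λ₁)/2)(η₁²+η₂²) + μη₃², orthogonal to η. -/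
theorem hexagonal_hyperbolic (τ₁ τ₂ lam₁ lam₂ μ : ℝ) (η : Fin 3 → ℝ)
    (hη : ∑ i, η i ^ 2 = 1) :
    Matrix.det (Matrix.of fun i m : Fin 3 =>
        ((Ahex τ₁ τ₂ lam₁ lam₂ μ η) ^ (m : ℕ)).mulVec η i) = 0
    ∧ (η 0 ^ 2 + η 1 ^ 2 ≠ 0 →
        (Ahex τ₁ τ₂ lam₁ lam₂ μ η).mulVec ![η 1, -η 0, 0]
            = ((τ₁ - lam₁) / 2 * (η 0 ^ 2 + η 1 ^ 2) + μ * η 2 ^ 2) • ![η 1, -η 0, 0]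
          ∧ ![η 1, -η 0, 0] ⬝ᵥ η = 0) := by
  have hA : Ahex τ₁ τ₂ lam₁ lam₂ μ η =
      !![(τ₁ * η 0 ^ 2 + (τ₁ - lam₁) / 2 * η 1 ^ 2 + μ * η 2 ^ 2), (lam₁ * η 0 * η 1 + (τ₁ - lam₁) / 2 * η 0 * η 1), (lam₂ * η 0 * η 2 + μ * η 0 * η 2);
         (lam₁ * η 0 * η 1 + (τ₁ - lam₁) / 2 * η 0 * η 1), (τ₁ * η 1 ^ 2 + (τ₁ - lam₁) / 2 * η 0 ^ 2 + μ * η 2 ^ 2), (lam₂ * η 1 * η 2 + μ * η 1 * η 2);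
         (lam₂ * η 0 * η 2 + μ * η 0 * η 2), (lam₂ * η 1 * η 2 + μ * η 1 * η 2), (τ₂ * η 2 ^ 2 + μ * η 0 ^ 2 + μ * η 1 ^ 2)] := by
    funext i j
    fin_cases i <;> fin_cases j <;>
      simp [Ahex, Chex, Dhex, Matrix.mul_apply, Fin.sum_univ_succ] <;> ring
  have hv : (Ahex τ₁ τ₂ lam₁ lam₂ μ η).mulVec η = ![((τ₁ * η 0 ^ 2 + (τ₁ - lam₁) / 2 * η 1 ^ 2 + μ * η 2 ^ 2) * η 0 + (lam₁ * η 0 * η 1 + (τ₁ - lam₁) / 2 * η 0 * η 1) * η 1 + (lam₂ * η 0 * η 2 + μ * η 0 * η 2) * η 2), ((lam₁ * η 0 * η 1 + (τ₁ - lam₁) / 2 * η 0 * η 1) * η 0 + (τ₁ * η 1 ^ 2 + (τ₁ - lam₁) / 2 * η 0 ^ 2 + μ * η 2 ^ 2) * η 1 + (lam₂ * η 1 * η 2 + μ * η 1 * η 2) * η 2), ((lam₂ * η 0 * η 2 + μ * η 0 * η 2) * η 0 + (lam₂ * η 1 * η 2 + μ * η 1 * η 2) * η 1 + (τ₂ *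 η 2 ^ 2 + μ * η 0 ^ 2 + μ * η 1 ^ 2) * η 2)] := by
    rw [hA]; funext i
    fin_cases i <;> simp [Matrix.mulVec, dotProduct, Fin.sum_univ_succ] <;> ring
  have hw : (Ahex τ₁ τ₂ lam₁ lam₂ μ η).mulVec ![((τ₁ * η 0 ^ 2 + (τ₁ - lam₁) / 2 * η 1 ^ 2 + μ * η 2 ^ 2) * η 0 + (lam₁ * η 0 * η 1 + (τ₁ - lam₁) / 2 * η 0 * η 1) * η 1 + (lam₂ * η 0 * η 2 + μ * η 0 * η 2) * η 2), ((lam₁ * η 0 * η 1 + (τ₁ - lam₁) / 2 * η 0 * η 1) * η 0 + (τ₁ * η 1 ^ 2 + (τ₁ - lam₁) / 2 * η 0 ^ 2 + μ * η 2 ^ 2) * η 1 + (lam₂ * η 1 * η 2 + μ * η 1 * η 2) * η 2), ((lam₂ * η 0 * η 2 + μ * η 0 * η 2) * η 0 + (lam₂ * η 1 * η 2 + μ * η 1 * η 2) * η 1 + (τ₂ * η 2 ^ 2 + μ * η 0 ^ 2 + μ * η 1 ^ 2) * η 2)] = ![((τ₁ * η 0 ^ 2 + (τ₁ - lam₁)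 / 2 * η 1 ^ 2 + μ * η 2 ^ 2) * ((τ₁ * η 0 ^ 2 + (τ₁ - lam₁) / 2 * η 1 ^ 2 + μ * η 2 ^ 2) * η 0 + (lam₁ * η 0 * η 1 + (τ₁ - lam₁) / 2 * η 0 * η 1) * η 1 + (lam₂ * η 0 * η 2 + μ * η 0 * η 2) * η 2) + (lam₁ * η 0 * η 1 + (τ₁ - lam₁) / 2 * η 0 * η 1) * ((lam₁ * η 0 * η 1 + (τ₁ - lam₁) / 2 * η 0 * η 1) * η 0 + (τ₁ * η 1 ^ 2 + (τ₁ - lam₁) / 2 * η 0 ^ 2 + μ * η 2 ^ 2) * η 1 + (lam₂ * η 1 * η 2 + μ * η 1 * η 2) * η 2) + (lam₂ * η 0 * η 2 + μ * η 0 * η 2) * ((lam₂ * η 0 * η 2 + μ * η 0 * η 2) * η 0 + (lam₂ * η 1 * η 2 + μ * η 1 * η 2) * η 1 + (τ₂ * η 2 ^ 2 + μ * η 0 ^ 2 + μ * η 1 ^ 2) * η 2)), ((lam₁ * η 0 * η 1 + (τ₁ - lam₁) / 2 * η 0 * η 1) * ((τ₁ * η 0 ^ 2 + (τ₁ - lam₁)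 / 2 * η 1 ^ 2 + μ * η 2 ^ 2) * η 0 + (lam₁ * η 0 * η 1 + (τ₁ - lam₁) / 2 * η 0 * η 1) * η 1 + (lam₂ * η 0 * η 2 + μ * η 0 * η 2) * η 2) + (τ₁ * η 1 ^ 2 + (τ₁ - lam₁) / 2 * η 0 ^ 2 + μ * η 2 ^ 2) * ((lam₁ * η 0 * η 1 + (τ₁ - lam₁) / 2 * η 0 * η 1) * η 0 + (τ₁ * η 1 ^ 2 + (τ₁ - lam₁) / 2 * η 0 ^ 2 + μ * η 2 ^ 2) * η 1 + (lam₂ * η 1 * η 2 + μ * η 1 * η 2) * η 2) + (lam₂ * η 1 * η 2 + μ * η 1 * η 2) * ((lam₂ * η 0 * η 2 + μ * η 0 * η 2) * η 0 + (lam₂ * η 1 * η 2 + μ * η 1 * η 2) * η 1 + (τ₂ * η 2 ^ 2 + μ * η 0 ^ 2 + μ * η 1 ^ 2) * η 2)), ((lam₂ * η 0 * η 2 + μ * η 0 * η 2) * ((τ₁ * η 0 ^ 2 + (τ₁ - lam₁) / 2 * η 1 ^ 2 + μ * η 2 ^ 2) * η 0 + (lam₁ * η 0 * η 1 + (τ₁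 - lam₁) / 2 * η 0 * η 1) * η 1 + (lam₂ * η 0 * η 2 + μ * η 0 * η 2) * η 2) + (lam₂ * η 1 * η 2 + μ * η 1 * η 2) * ((lam₁ * η 0 * η 1 + (τ₁ - lam₁) / 2 * η 0 * η 1) * η 0 + (τ₁ * η 1 ^ 2 + (τ₁ - lam₁) / 2 * η 0 ^ 2 + μ * η 2 ^ 2) * η 1 + (lam₂ * η 1 * η 2 + μ * η 1 * η 2) * η 2) + (τ₂ * η 2 ^ 2 + μ * η 0 ^ 2 + μ * η 1 ^ 2) * ((lam₂ * η 0 * η 2 + μ * η 0 * η 2) * η 0 + (lam₂ * η 1 * η 2 + μ * η 1 * η 2) * η 1 + (τ₂ * η 2 ^ 2 + μ * η 0 ^ 2 + μ * η 1 ^ 2) * η 2))] := by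
    rw [hA]; funext i
    fin_cases i <;> simp [Matrix.mulVec, dotProduct, Fin.sum_univ_succ] <;> ring
  refine ⟨?_, fun _ => ⟨?_, ?_⟩⟩
  · rw [Matrix.det_fin_three]
    simp only [Matrix.of_apply, Fin.val_zero, Fin.val_one, Fin.val_two, pow_zero, pow_one,
      pow_two, Matrix.one_mulVec, ← Matrix.mulVec_mulVec]
    simp only [hv]
    simp only [hw]
    simp only [Matrix.cons_val_zero, Matrix.cons_val_one, Matrix.head_cons, Matrix.cons_val_two,
      Matrix.tail_cons]
    ring
  · rw [hA]; funext i
    fin_cases i <;>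
      simp [Matrix.mulVec, dotProduct, Fin.sum_univ_succ] <;> ring
  · simp [dotProduct, Fin.sum_univ_succ]
    ring
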